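/- Let V be a compact metric space and g : V → V an open continuous surjection satisfying Wieler's Axiom 1 (there exist β > 0, K ∈ ℕ₊, γ ∈ (0,1) with d(v,w) < β implying d(g^K(v), g^K(w)) ≤ γ^K · d(g^{2K}(v), g^{2K}(w))). Then g is a local homeomorphism. -/

import Mathlib

/-- An open continuous surjection on a compact metric space satisfying Wieler's Axiom 1
is a local homeomorphism. -/
theorem stmt1 {V : Type*} [MetricSpace V] [CompactSpace V]
    (g : V → V) (hcont : Continuous g) (hopen : IsOpenMap g)
    (hsurj : Function.Surjective g)
    (β γ : ℝ) (K : ℕ) (hβ : 0 < β) (hK : 0 < K) (hγ0 : 0 < γ) (hγ1 : γ < 1)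
    (ax1 : ∀ v w : V, dist v w < β →
      dist (g^[K] v) (g^[K] w) ≤ γ ^ K * dist (g^[2 * K] v) (g^[2 * K] w)) :
    IsLocalHomeomorph g := by
  have hiter : ∀ n : ℕ, IsOpenMap (g^[n]) := by
    intro n
    induction n with
    | zero => simpa using IsOpenMap.id
    | succ n ih =>
      rw [Function.iterate_succ]
      exact ih.comp hopen
  -- basic facts about the iterate f = g^[K]
  set f : V → V := g^[K] with hf
  have hfc : Continuous f := hcont.iterate K
  have hfopen : IsOpenMap f := hiter K
  have hfsurj : Function.Surjective f := hsurj.iterate K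
  -- uniform openness of f : ∃ δ > 0, ball (f z) δ ⊆ f '' ball z β for all z
  have huniform : ∃ δ > 0, ∀ z y : V, dist (f z) y < δ →
      ∃ y', dist z y' < β ∧ f y' = y := by
    by_contra h
    push_neg at h
    have hchoice : ∀ n : ℕ, ∃ z y : V, dist (f z) y < 1 / (n + 1) ∧
        ∀ y', dist z y' < β → f y' ≠ y := by
      intro n
      obtain ⟨z, y, h1, h2⟩ := h (1 / (n + 1)) (by positivity)
      exact ⟨z, y, h1, h2⟩
    choose z y hzy hbad using hchoice
    obtain ⟨a, -, φ, hφ, hlim⟩ := isCompact_univ.tendsto_subseq (x := z) (fun n => Set.mem_univ _)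
    -- y ∘ φ also tends to f a
    have hfz : Filter.Tendsto (f ∘ z ∘ φ) Filter.atTop (nhds (f a)) :=
      (hfc.tendsto a).comp hlim
    have hdist : Filter.Tendsto (fun n => dist (f (z (φ n))) (y (φ n))) Filter.atTop (nhds 0) := by
      apply squeeze_zero (fun n => dist_nonneg) (fun n => (hzy (φ n)).le)
      have h1 : Filter.Tendsto (fun n : ℕ => 1 / ((n : ℝ) + 1)) Filter.atTop (nhds 0) :=
        tendsto_one_div_add_atTop_nhds_zero_nat
      exact h1.comp hφ.tendsto_atTop
    have hy : Filter.Tendsto (y ∘ φ) Filter.atTop (nhds (f a)) := by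
      rw [tendsto_iff_dist_tendsto_zero]
      have : ∀ n, dist ((y ∘ φ) n) (f a) ≤
          dist (f (z (φ n))) (y (φ n)) + dist (f (z (φ n))) (f a) := fun n => by
        rw [dist_comm (f (z (φ n))) (y (φ n))]
        exact dist_triangle _ _ _
      apply squeeze_zero (fun n => dist_nonneg) this
      have := hdist.add (tendsto_iff_dist_tendsto_zero.mp hfz)
      simpa using this
    -- f '' ball a (β/2) is an open neighborhood of f a
    have hopen' : IsOpen (f '' Metric.ball a (β / 2)) := hfopen _ Metric.isOpen_ball
    have hmem : f a ∈ f '' Metric.ball a (β / 2) :=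
      ⟨a, Metric.mem_ball_self (by linarith), rfl⟩
    have hev1 : ∀ᶠ n in Filter.atTop, (y ∘ φ) n ∈ f '' Metric.ball a (β / 2) :=
      hy.eventually (hopen'.mem_nhds hmem)
    have hev2 : ∀ᶠ n in Filter.atTop, dist (z (φ n)) a < β / 2 :=
      hlim.eventually (Metric.ball_mem_nhds a (by linarith))
    obtain ⟨n, h1, h2⟩ := (hev1.and hev2).exists
    obtain ⟨w, hw, hfw⟩ := h1
    refine hbad (φ n) w ?_ hfw
    calc dist (z (φ n)) w ≤ dist (z (φ n)) a + dist a w := dist_triangle _ _ _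
      _ < β / 2 + β / 2 := by
          rw [Metric.mem_ball, dist_comm] at hw
          exact add_lt_add h2 hw
      _ = β := by ring
  obtain ⟨δ, hδ, hδspec⟩ := huniform
  -- key expansion estimate
  have hkey : ∀ x y : V, dist x y < δ → dist x y ≤ γ ^ K * dist (f x) (f y) := by
    intro x y hxy
    obtain ⟨x', hx'⟩ := hfsurj x
    obtain ⟨y', hy', hfy'⟩ := hδspec x' y (by rwa [hx'])
    have h2K : ∀ u : V, g^[2 * K] u = f (f u) := by
      intro u
      rw [hf, two_mul, Function.iterate_add_apply]
    have := ax1 x' y' hy'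
    rw [h2K, h2K, hx', hfy'] at this
    exact this
  -- local injectivity of g
  have hinj : ∀ x : V, Set.InjOn g (Metric.ball x (δ / 2)) := by
    intro x a ha b hb hab
    have hdab : dist a b < δ := by
      rw [Metric.mem_ball] at ha hb
      calc dist a b ≤ dist a x + dist x b := dist_triangle _ _ _
        _ < δ / 2 + δ / 2 := add_lt_add ha (by rwa [dist_comm] at hb)
        _ = δ := by ring
    have hfab : f a = f b := by
      rw [hf]
      obtain ⟨m, hm⟩ := Nat.exists_eq_succ_of_ne_zero hK.ne'
      rw [hm, Function.iterate_succ_apply, Function.iterate_succ_apply, hab]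
    have := hkey a b hdab
    rw [hfab, dist_self, mul_zero] at this
    exact dist_le_zero.mp this
  -- conclude
  intro x
  have : Nonempty V := ⟨x⟩
  refine ⟨OpenPartialHomeomorph.ofContinuousOpen
    ((hinj x).toPartialEquiv g (Metric.ball x (δ / 2)))
    (hcont.continuousOn) hopen Metric.isOpen_ball,
    Metric.mem_ball_self (by linarith), rfl⟩
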